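/- Let q be a prime power, t a fixed positive integer, and 0 < δ ≤ 1. Then the asymptotic metric α_q^{(t)}(δ) = limsup_{n→∞} max{ (dim C1)/n : there exist nested linear codes C2 ⊆ C1 ⊆ F_q^n with dim C1 − dim C2 ≥ t and M_t(C1, C2)/n ≥ δ } satisfies α_q^{(t)}(δ) = 1 − δ. -/

import Mathlib

/-- `V_I = {x ∈ F^n : i ∉ I → x i = 0}` -/
noncomputable def VI (F : Type) [Field F] (n : ℕ) (I : Finset (Fin n)) :
    Submodule F (Fin n → F) :=
  Submodule.pi (↑I)ᶜ (fun _ => (⊥ : Submodule F F))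

/-- the `t`-th relative generalized Hamming weight of `C₂ ⊆ C₁ ⊆ F^n` -/
noncomputable def RGHW (F : Type) [Field F] {n : ℕ} (t : ℕ)
    (C₁ C₂ : Submodule F (Fin n → F)) : ℕ :=
  sInf {d : ℕ | ∃ I : Finset (Fin n), I.card = d ∧
    Module.finrank F ↥(C₁ ⊓ VI F n I) ≥ Module.finrank F ↥(C₂ ⊓ VI F n I) + t}

/-- `π(q) = ∏_{i=1}^∞ (1 - q^{-i})` -/
noncomputable def piq (q : ℝ) : ℝ := ∏' i : ℕ, (1 - (q ^ (i + 1))⁻¹)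

/-- `N₁(w,u) = ∏_{i=0}^{u-1}(q^w - q^i) / ∏_{i=0}^{u-1}(q^u - q^i)` -/
noncomputable def N1 (q : ℝ) (w u : ℕ) : ℝ :=
  (∏ i ∈ Finset.range u, (q ^ w - q ^ i)) / (∏ i ∈ Finset.range u, (q ^ u - q ^ i))

/-- `N₂(w,u,v) = ∏_{i=0}^{v-1}(q^w - q^{u+i}) / ∏_{i=0}^{v-1}(q^v - q^i)` -/
noncomputable def N2 (q : ℝ) (w u v : ℕ) : ℝ :=
  (∏ i ∈ Finset.range v, (q ^ w - q ^ (u + i))) / (∏ i ∈ Finset.range v, (q ^ v - q ^ i))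

/-- `N₃(w,u,v,a) = N₁(u,a) · N₂(w-a, u-a, v-a)` -/
noncomputable def N3 (q : ℝ) (w u v a : ℕ) : ℝ :=
  N1 q u a * N2 q (w - a) (u - a) (v - a)

open Module Finset Filter Topology

variable {F : Type} [Field F]

lemma mem_VI {n : ℕ} {I : Finset (Fin n)} {x : Fin n → F} :
    x ∈ VI F n I ↔ ∀ i, i ∉ I → x i = 0 := by
  simp [VI, Submodule.mem_pi]

lemma VI_univ (n : ℕ) : VI F n Finset.univ = ⊤ := by
  ext x; simp [mem_VI]

lemma finrank_VI (n : ℕ) (I : Finset (Fin n)) :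
    finrank F ↥(VI F n I) = I.card := by
  have e : ↥(VI F n I) ≃ₗ[F] (↥I → F) :=
    { toFun := fun x i => x.1 i.1
      map_add' := fun x y => rfl
      map_smul' := fun c x => rfl
      invFun := fun y => ⟨fun j => if h : j ∈ I then y ⟨j, h⟩ else 0, by
        rw [mem_VI]; intro i hi; simp [hi]⟩
      left_inv := by
        rintro ⟨x, hx⟩
        ext j
        by_cases h : j ∈ I
        · simp [h]
        · simp [h, (mem_VI.1 hx) j h]
      right_inv := by
        intro y; ext i; simp [i.2] }
  rw [e.finrank_eq, Module.finrank_fintype_fun_eq_card, Fintype.card_coe]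

set_option synthInstance.maxHeartbeats 1000000 in
lemma finrank_le_inf_add_card {n : ℕ} (C D : Submodule F (Fin n → F)) (S : Finset (Fin n))
    (h : ∀ x ∈ C, (∀ i ∈ S, x i = 0) → x ∈ D) :
    finrank F ↥C ≤ finrank F ↥(C ⊓ D) + S.card := by
  classical
  let g : ↥C →ₗ[F] (↥S → F) :=
    (LinearMap.pi fun i : ↥S => LinearMap.proj i.1).comp C.subtype
  have hrn := LinearMap.finrank_range_add_finrank_ker g
  have hker : finrank F ↥(LinearMap.ker g) ≤ finrank F ↥(C ⊓ D) := by
    apply LinearMap.finrank_le_finrank_of_injective (f :=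
      { toFun := fun (x : ↥(LinearMap.ker g)) => (⟨x.1.1, by
          refine Submodule.mem_inf.2 ⟨x.1.2, h x.1.1 x.1.2 ?_⟩
          intro i hi
          have hx0 : g x.1 = 0 := x.2
          have := congrFun hx0 ⟨i, hi⟩
          exact this⟩ : ↥(C ⊓ D))
        map_add' := fun x y => by ext1; rfl
        map_smul' := fun c x => by ext1; rfl })
    intro a b hab
    ext1; ext1
    exact congrArg (fun (z : ↥(C ⊓ D)) => z.1) hab
  have hrange : finrank F ↥(LinearMap.range g) ≤ S.card := by
    calc finrank F ↥(LinearMap.range g) ≤ finrank F (↥S → F) := Submodule.finrank_le _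
    _ = S.card := by rw [Module.finrank_fintype_fun_eq_card, Fintype.card_coe]
  omega

set_option synthInstance.maxHeartbeats 1000000 in
lemma exists_coord {n : ℕ} (C : Submodule F (Fin n → F)) :
    ∃ s : Finset (Fin n), s.card ≤ finrank F ↥C ∧
      ∀ x ∈ C, (∀ i ∈ s, x i = 0) → x = 0 := by
  classical
  suffices H : ∀ N (s : Finset (Fin n)), s.card ≤ N →
      (∀ x ∈ C, (∀ i ∈ s, x i = 0) → x = 0) →
      ∃ s' : Finset (Fin n), s'.card ≤ finrank F ↥C ∧
        ∀ x ∈ C, (∀ i ∈ s', x i = 0) → x = 0 by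
    refine H n Finset.univ (by simp) ?_
    intro x _ hx
    funext i
    exact hx i (mem_univ i)
  intro N
  induction N with
  | zero =>
    intro s hs hsep
    exact ⟨s, by omega, hsep⟩
  | succ N ih =>
    intro s hs hsep
    by_cases hle : s.card ≤ finrank F ↥C
    · exact ⟨s, hle, hsep⟩
    -- functionals
    · push_neg at hle
      set φ : ↥s → Module.Dual F ↥C :=
        fun i => (LinearMap.proj i.1).comp C.subtype with hφ
      have hnli : ¬ LinearIndependent F φ := by
        intro hli
        have := hli.fintype_card_le_finrank
        rw [Subspace.dual_finrank_eq, Fintype.card_coe] at this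
        omega
      obtain ⟨g, hg0, j, hgj⟩ := Fintype.not_linearIndependent_iff.1 hnli
      refine ih (s.erase j.1) ?_ ?_
      · have := Finset.card_erase_of_mem j.2
        omega
      · intro x hx hxz
        refine hsep x hx ?_
        intro i hi
        by_cases hij : i = j.1
        · subst hij
          have happ := congrArg (fun (ψ : Module.Dual F ↥C) => ψ ⟨x, hx⟩) hg0
          simp only [LinearMap.sum_apply, LinearMap.smul_apply, LinearMap.zero_apply] at happ
          have hterm : ∀ k : ↥s, g k • φ k ⟨x, hx⟩ = if k = j then g j * x (j:Fin n) else 0 := by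
            intro k
            by_cases hkj : k = j
            · subst hkj; simp [hφ, smul_eq_mul]
            · have : (k : Fin n) ∈ s.erase j.1 := by
                refine Finset.mem_erase.2 ⟨?_, k.2⟩
                intro hk
                exact hkj (Subtype.ext hk)
              simp [hφ, hxz _ this, hkj]
          rw [Finset.sum_congr rfl (fun k _ => hterm k)] at happ
          rw [Finset.sum_ite_eq' Finset.univ j (fun _ => g j * x (j:Fin n))] at happ
          simp at happ
          rcases happ with h | h
          · exact absurd h hgj
          · exact h
        · exact hxz i (Finset.mem_erase.2 ⟨hij, hi⟩)

lemma card_filter_val (n a b : ℕ) (hb : b ≤ n) :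
    (Finset.univ.filter fun i : Fin n => a ≤ i.val ∧ i.val < b).card = b - a := by
  rw [← Nat.card_Ico a b]
  exact Finset.card_bij' (fun i _ => i.val)
    (fun m hm => ⟨m, lt_of_lt_of_le (Finset.mem_Ico.1 hm).2 hb⟩)
    (by intro i hi; simp at hi ⊢; omega)
    (by intro m hm; simp at hm ⊢; omega)
    (by intro i hi; rfl)
    (by intro m hm; rfl)


lemma singleton_bound {n : ℕ} (t : ℕ) (ht : 1 ≤ t) (C1 C2 : Submodule F (Fin n → F))
    (h12 : C2 ≤ C1) (hd : finrank F ↥C1 - finrank F ↥C2 ≥ t) :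
    RGHW F t C1 C2 ≤ n - (finrank F ↥C1 - t) := by
  classical
  set k1 := finrank F ↥C1 with hk1
  set k2 := finrank F ↥C2 with hk2
  have hk1n : k1 ≤ n := by
    have := Submodule.finrank_le C1
    rwa [Module.finrank_fintype_fun_eq_card, Fintype.card_fin] at this
  have hk : k2 + t ≤ k1 := by omega
  obtain ⟨E0, hE0card, hE0sep⟩ := exists_coord C2
  obtain ⟨E, hE0E, hEcard⟩ := Finset.exists_superset_card_eq
    (show E0.card ≤ k1 - t by omega) (by rw [Fintype.card_fin]; omega)
  set I : Finset (Fin n) := Eᶜ with hI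
  have hC2I : C2 ⊓ VI F n I = ⊥ := by
    rw [Submodule.eq_bot_iff]
    rintro x hx
    have hx2 := (Submodule.mem_inf.1 hx).1
    have hxV := mem_VI.1 (Submodule.mem_inf.1 hx).2
    refine hE0sep x hx2 ?_
    intro i hi
    exact hxV i (by simp [hI, hE0E hi])
  have hC1I : k1 ≤ finrank F ↥(C1 ⊓ VI F n I) + (k1 - t) := by
    have := finrank_le_inf_add_card C1 (VI F n I) E ?_
    · rwa [hEcard] at this
    · intro x hx hxz
      rw [mem_VI]
      intro i hi
      exact hxz i (by simpa [hI] using hi)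
  have hmem : (n - (k1 - t)) ∈ {d : ℕ | ∃ I : Finset (Fin n), I.card = d ∧
      Module.finrank F ↥(C1 ⊓ VI F n I) ≥ Module.finrank F ↥(C2 ⊓ VI F n I) + t} := by
    refine ⟨I, ?_, ?_⟩
    · rw [hI, Finset.card_compl, Fintype.card_fin, hEcard]
    · rw [hC2I]
      have hb : finrank F (↥(⊥ : Submodule F (Fin n → F))) = 0 := finrank_bot F _
      rw [hb]
      omega
  exact Nat.sInf_le hmem

lemma construction (t : ℕ) (ht : 1 ≤ t) {n m : ℕ} (htm : t ≤ m) (hmn : m ≤ n) :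
    ∃ C1 C2 : Submodule F (Fin n → F), C2 ≤ C1 ∧
      finrank F ↥C1 = (n - m) + t ∧ finrank F ↥C2 = n - m ∧
      m ≤ RGHW F t C1 C2 := by
  classical
  set k2 := n - m with hk2
  have hn1 : 1 ≤ n := le_trans (le_trans ht htm) hmn
  have hkt : k2 + t ≤ n := by omega
  set J : Finset (Fin n) := Finset.univ.filter (fun i : Fin n => 0 ≤ i.val ∧ i.val < k2) with hJ
  set C2 := VI F n J with hC2
  have hC2mem : ∀ x : Fin n → F, x ∈ C2 ↔ ∀ i : Fin n, k2 ≤ i.val → x i = 0 := by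
    intro x
    rw [hC2, mem_VI]
    constructor
    · intro h i hi
      refine h i ?_
      simp only [hJ, Finset.mem_filter, Finset.mem_univ, true_and]
      omega
    · intro h i hi
      simp only [hJ, Finset.mem_filter, Finset.mem_univ, true_and] at hi
      exact h i (by omega)
  set u : Fin t → (Fin n → F) := fun s i =>
    if s.val < t - 1 then (if i.val = k2 + s.val then (1:F) else 0)
    else (if k2 + (t-1) ≤ i.val then 1 else 0) with hu
  set C1 := C2 ⊔ Submodule.span F (Set.range u) with hC1
  have h12 : C2 ≤ C1 := le_sup_left
  -- key evaluation
  have key : ∀ (c : Fin t → F) (s0 : Fin t), ∃ i : Fin n, k2 ≤ i.val ∧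
      (∑ s, c s • u s) i = c s0 := by
    intro c s0
    by_cases hlt : s0.val < t - 1
    · obtain ⟨i0, hi0⟩ : ∃ i0 : Fin n, i0.val = k2 + s0.val := ⟨⟨k2 + s0.val, by omega⟩, rfl⟩
      refine ⟨i0, by omega, ?_⟩
      rw [Finset.sum_apply]
      have hterm : ∀ s : Fin t, s ∈ Finset.univ →
          (c s • u s) i0 = if s = s0 then c s0 else 0 := by
        intro s _
        simp only [Pi.smul_apply, smul_eq_mul, hu]
        by_cases hss : s = s0
        · subst hss
          rw [if_pos hlt, if_pos (by omega : i0.val = k2 + s.val), if_pos rfl, mul_one]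
        · rw [if_neg hss]
          split_ifs with h1 h2
          · exact absurd (Fin.ext (by omega : s.val = s0.val)) hss
          · exact mul_zero _
          · omega
          · exact mul_zero _
      rw [Finset.sum_congr rfl hterm, Finset.sum_ite_eq' Finset.univ s0 (fun _ => c s0)]
      simp
    · obtain ⟨i0, hi0⟩ : ∃ i0 : Fin n, i0.val = n - 1 := ⟨⟨n - 1, by omega⟩, rfl⟩
      refine ⟨i0, by omega, ?_⟩
      rw [Finset.sum_apply]
      have hterm : ∀ s : Fin t, s ∈ Finset.univ →
          (c s • u s) i0 = if s = s0 then c s0 else 0 := by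
        intro s _
        simp only [Pi.smul_apply, smul_eq_mul, hu]
        have hs0 : s0.val = t - 1 := by have := s0.isLt; omega
        by_cases hss : s = s0
        · subst hss
          rw [if_neg hlt, if_pos (by omega : k2 + (t-1) ≤ i0.val), if_pos rfl, mul_one]
        · have hsval : s.val ≠ t - 1 := fun hcontra => hss (Fin.ext (by omega))
          rw [if_neg hss, if_pos (by have := s.isLt; omega : s.val < t - 1),
            if_neg (by have := s.isLt; omega : ¬ i0.val = k2 + s.val), mul_zero]
      rw [Finset.sum_congr rfl hterm, Finset.sum_ite_eq' Finset.univ s0 (fun _ => c s0)]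
      simp
  -- linear independence
  have hli : LinearIndependent F u := by
    rw [Fintype.linearIndependent_iff]
    intro c hc s0
    obtain ⟨i, _, hi⟩ := key c s0
    rw [hc] at hi
    simpa using hi.symm
  -- trivial intersection
  have hinf : C2 ⊓ Submodule.span F (Set.range u) = ⊥ := by
    rw [Submodule.eq_bot_iff]
    intro x hx
    obtain ⟨hx2, hxs⟩ := Submodule.mem_inf.1 hx
    obtain ⟨c, hc⟩ := (Submodule.mem_span_range_iff_exists_fun F).1 hxs
    have hc0 : ∀ s0 : Fin t, c s0 = 0 := by
      intro s0
      obtain ⟨i, hik, hi⟩ := key c s0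
      rw [hc] at hi
      rw [← hi]
      exact (hC2mem x).1 hx2 i hik
    rw [← hc]
    apply Finset.sum_eq_zero
    intro s _
    rw [hc0 s, zero_smul]
  -- finranks
  have hrk2 : finrank F ↥C2 = k2 := by
    rw [hC2, finrank_VI, hJ]
    have := card_filter_val n 0 k2 (by omega)
    simpa using this
  have hrkspan : finrank F ↥(Submodule.span F (Set.range u)) = t := by
    rw [finrank_span_eq_card hli, Fintype.card_fin]
  have hrk1 : finrank F ↥C1 = k2 + t := by
    have := Submodule.finrank_sup_add_finrank_inf_eq C2 (Submodule.span F (Set.range u))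
    rw [hinf, finrank_bot, hrk2, hrkspan, ← hC1] at this
    omega
  refine ⟨C1, C2, h12, hrk1, hrk2, ?_⟩
  -- the constancy property
  have hconst : ∀ x ∈ C1, ∀ i : Fin n, k2 + (t-1) ≤ i.val → x i = x ⟨n-1, by omega⟩ := by
    set P : Submodule F (Fin n → F) :=
      { carrier := {x | ∀ i : Fin n, k2 + (t-1) ≤ i.val → x i = x ⟨n-1, by omega⟩}
        add_mem' := by
          intro a b ha hb i hi
          simp only [Pi.add_apply, ha i hi, hb i hi]
        zero_mem' := by intro i hi; rfl
        smul_mem' := by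
          intro c a ha i hi
          simp only [Pi.smul_apply, ha i hi] } with hP
    have hCP : C1 ≤ P := by
      rw [hC1]
      apply sup_le
      · intro x hx i hi
        have h1 := (hC2mem x).1 hx i (by omega)
        have h2 := (hC2mem x).1 hx ⟨n-1, by omega⟩ (by simp; omega)
        rw [h1, h2]
      · rw [Submodule.span_le]
        rintro _ ⟨s, rfl⟩
        intro i hi
        simp only [hu, Fin.val_mk]
        by_cases hs : s.val < t - 1
        · rw [if_pos hs, if_neg (by omega), if_pos hs, if_neg (by omega)]
        · rw [if_neg hs, if_neg hs, if_pos hi, if_pos (by omega)]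
    intro x hx i hi
    exact hCP hx i hi
  -- RGHW lower bound
  have hne : {d : ℕ | ∃ I : Finset (Fin n), I.card = d ∧
      Module.finrank F ↥(C1 ⊓ VI F n I) ≥ Module.finrank F ↥(C2 ⊓ VI F n I) + t}.Nonempty := by
    refine ⟨(Finset.univ : Finset (Fin n)).card, Finset.univ, rfl, ?_⟩
    rw [VI_univ, inf_top_eq, inf_top_eq, hrk1, hrk2]
  obtain ⟨I, hIcard, hIdiff⟩ := Nat.sInf_mem hne
  set Bset : Finset (Fin n) := Finset.univ.filter (fun i : Fin n => k2 ≤ i.val ∧ i.val < n) with hB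
  have hBcard : Bset.card = m := by
    rw [hB, card_filter_val n k2 n (le_refl n)]
    omega
  have hBI : Bset ⊆ I := by
    intro b hb
    by_contra hbI
    have hbB : k2 ≤ b.val ∧ b.val < n := by
      simpa [hB] using hb
    set k₀ : Fin n := if k2 + (t-1) ≤ b.val then b else ⟨n-1, by omega⟩ with hk₀
    have hk₀K : k2 + (t-1) ≤ k₀.val := by
      rw [hk₀]
      split_ifs with h
      · exact h
      · simp; omega
    set Tset : Finset (Fin n) :=
      Finset.univ.filter (fun i : Fin n => k2 ≤ i.val ∧ i.val < k2 + (t-1)) with hT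
    have hTcard : Tset.card = t - 1 := by
      rw [hT, card_filter_val n k2 (k2 + (t-1)) (by omega)]
      omega
    have hk₀T : k₀ ∉ Tset := by
      simp only [hT, Finset.mem_filter, Finset.mem_univ, true_and]
      omega
    have hbmem : b ∈ insert k₀ Tset := by
      by_cases h : k2 + (t-1) ≤ b.val
      · have : k₀ = b := by rw [hk₀, if_pos h]
        rw [this]; exact Finset.mem_insert_self b _
      · apply Finset.mem_insert_of_mem
        simp only [hT, Finset.mem_filter, Finset.mem_univ, true_and]
        omega
    set S : Finset (Fin n) := (insert k₀ Tset).erase b with hS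
    have hScard : S.card = t - 1 := by
      rw [hS, Finset.card_erase_of_mem hbmem, Finset.card_insert_of_notMem hk₀T, hTcard]
      omega
    have hsep : ∀ x ∈ C1 ⊓ VI F n I, (∀ i ∈ S, x i = 0) → x ∈ C2 := by
      intro x hx hxS
      obtain ⟨hx1, hxV'⟩ := Submodule.mem_inf.1 hx
      have hxV := mem_VI.1 hxV'
      have hxb : x b = 0 := hxV b hbI
      have hk₀0 : x k₀ = 0 := by
        by_cases h : k2 + (t-1) ≤ b.val
        · rw [hk₀, if_pos h]; exact hxb
        · have hk₀ne : k₀ ≠ b := by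
            rw [hk₀, if_neg h]
            intro hcontra
            have : (⟨n-1, by omega⟩ : Fin n).val = b.val := by rw [hcontra]
            simp at this
            omega
          exact hxS k₀ (Finset.mem_erase.2 ⟨hk₀ne, Finset.mem_insert_self _ _⟩)
      have hlast0 : x ⟨n-1, by omega⟩ = 0 := by
        rw [← hconst x hx1 k₀ hk₀K]
        exact hk₀0
      rw [hC2mem]
      intro i hi
      by_cases hiK : k2 + (t-1) ≤ i.val
      · rw [hconst x hx1 i hiK]
        exact hlast0
      · by_cases hib : i = b
        · rw [hib]; exact hxb
        · refine hxS i (Finset.mem_erase.2 ⟨hib, Finset.mem_insert_of_mem ?_⟩)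
          simp only [hT, Finset.mem_filter, Finset.mem_univ, true_and]
          omega
    have hbound := finrank_le_inf_add_card (C1 ⊓ VI F n I) C2 S hsep
    have heq : (C1 ⊓ VI F n I) ⊓ C2 = C2 ⊓ VI F n I := by
      rw [inf_right_comm, inf_eq_right.mpr h12]
    rw [heq, hScard] at hbound
    omega
  calc m = Bset.card := hBcard.symm
  _ ≤ I.card := Finset.card_le_card hBI
  _ = RGHW F t C1 C2 := hIcard

set_option maxHeartbeats 1000000 in
/-- Theorem 2: the asymptotic metric of Zhuang et al. equals `1 - δ`. -/
theorem alpha_eq (F : Type) [Field F] [Fintype F] (t : ℕ) (ht : 1 ≤ t)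
    (δ : ℝ) (hδ0 : 0 < δ) (hδ1 : δ ≤ 1) :
    Filter.limsup (fun n : ℕ =>
        sSup {r : ℝ | ∃ C₁ C₂ : Submodule F (Fin n → F), C₂ ≤ C₁ ∧
          Module.finrank F C₁ - Module.finrank F C₂ ≥ t ∧
          (RGHW F t C₁ C₂ : ℝ) / n ≥ δ ∧
          r = (Module.finrank F C₁ : ℝ) / n})
      Filter.atTop = 1 - δ := by
  classical
  set f : ℕ → ℝ := fun n : ℕ =>
    sSup {r : ℝ | ∃ C₁ C₂ : Submodule F (Fin n → F), C₂ ≤ C₁ ∧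
      Module.finrank F C₁ - Module.finrank F C₂ ≥ t ∧
      (RGHW F t C₁ C₂ : ℝ) / n ≥ δ ∧
      r = (Module.finrank F C₁ : ℝ) / n} with hf
  have hub : ∀ n : ℕ, 1 ≤ n → f n ≤ 1 - δ + (t : ℝ) / n := by
    intro n hn
    have hnpos : (0:ℝ) < n := by exact_mod_cast hn
    have htn : (0:ℝ) ≤ (t:ℝ)/n := by positivity
    refine Real.sSup_le ?_ (by linarith)
    rintro r ⟨C1, C2, h12, hd, hR, rfl⟩
    set k1 := finrank F ↥C1 with hk1
    have hk1t : t ≤ k1 := by omega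
    have hk1n : k1 ≤ n := by
      have := Submodule.finrank_le C1
      rwa [Module.finrank_fintype_fun_eq_card, Fintype.card_fin] at this
    have hsing := singleton_bound t ht C1 C2 h12 hd
    have hRn : δ * n ≤ (RGHW F t C1 C2 : ℝ) := by
      rw [ge_iff_le, le_div_iff₀ hnpos] at hR
      exact hR
    have hcast : ((n - (k1 - t) : ℕ) : ℝ) = (n:ℝ) - (k1:ℝ) + t := by
      have h1 : k1 - t ≤ n := by omega
      rw [Nat.cast_sub h1, Nat.cast_sub hk1t]
      ring
    have hRle : (RGHW F t C1 C2 : ℝ) ≤ (n:ℝ) - k1 + t := by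
      rw [← hcast]
      exact_mod_cast hsing
    rw [div_le_iff₀ hnpos]
    have hmul : (1 - δ + (t:ℝ)/n) * n = n - δ*n + t := by
      field_simp
    rw [hmul]
    linarith
  have hlb : ∀ n : ℕ, max 1 ⌈(t:ℝ)/δ⌉₊ ≤ n → 1 - δ ≤ f n := by
    intro n hn
    have hn1 : 1 ≤ n := le_trans (le_max_left _ _) hn
    have hnpos : (0:ℝ) < n := by exact_mod_cast hn1
    have hceil : ((t:ℝ)/δ) ≤ n := by
      have : ⌈(t:ℝ)/δ⌉₊ ≤ n := le_trans (le_max_right _ _) hn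
      exact le_trans (Nat.le_ceil _) (by exact_mod_cast this)
    have htdn : (t:ℝ) ≤ δ * n := by
      rw [div_le_iff₀ hδ0] at hceil
      linarith
    set m := ⌈δ * (n:ℝ)⌉₊ with hm
    have hdn0 : (0:ℝ) ≤ δ * n := by positivity
    have htm : t ≤ m := by
      have h1 : (t:ℝ) ≤ (m:ℝ) := le_trans htdn (Nat.le_ceil _)
      exact_mod_cast h1
    have hmn : m ≤ n := by
      rw [hm, Nat.ceil_le]
      nlinarith
    obtain ⟨C1, C2, h12, hr1, hr2, hRG⟩ := construction (F := F) t ht htm hmn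
    have hmem : ((finrank F ↥C1 : ℝ) / n) ∈ {r : ℝ | ∃ C₁ C₂ : Submodule F (Fin n → F), C₂ ≤ C₁ ∧
        Module.finrank F C₁ - Module.finrank F C₂ ≥ t ∧
        (RGHW F t C₁ C₂ : ℝ) / n ≥ δ ∧
        r = (Module.finrank F C₁ : ℝ) / n} := by
      refine ⟨C1, C2, h12, by rw [hr1, hr2]; omega, ?_, rfl⟩
      rw [ge_iff_le, le_div_iff₀ hnpos]
      calc δ * n ≤ (m:ℝ) := Nat.le_ceil _
      _ ≤ (RGHW F t C1 C2 : ℝ) := by exact_mod_cast hRG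
    have hbdd : BddAbove {r : ℝ | ∃ C₁ C₂ : Submodule F (Fin n → F), C₂ ≤ C₁ ∧
        Module.finrank F C₁ - Module.finrank F C₂ ≥ t ∧
        (RGHW F t C₁ C₂ : ℝ) / n ≥ δ ∧
        r = (Module.finrank F C₁ : ℝ) / n} := by
      refine ⟨1, ?_⟩
      rintro r ⟨C1', C2', _, _, _, rfl⟩
      rw [div_le_one hnpos]
      have := Submodule.finrank_le C1'
      rw [Module.finrank_fintype_fun_eq_card, Fintype.card_fin] at this
      exact_mod_cast this
    have hle := le_csSup hbdd hmem
    have hr : 1 - δ ≤ (finrank F ↥C1 : ℝ) / n := by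
      rw [le_div_iff₀ hnpos, hr1]
      have hcast : (((n - m) + t : ℕ) : ℝ) = (n:ℝ) - m + t := by
        rw [Nat.cast_add, Nat.cast_sub hmn]
      rw [hcast]
      have hm1 : (m:ℝ) < δ * n + 1 := Nat.ceil_lt_add_one hdn0
      have ht1 : (1:ℝ) ≤ (t:ℝ) := by exact_mod_cast ht
      nlinarith
    exact le_trans hr hle
  have htend : Tendsto f atTop (𝓝 (1 - δ)) := by
    have h2 : Tendsto (fun n : ℕ => 1 - δ + (t:ℝ)/n) atTop (𝓝 (1 - δ)) := by
      have hdiv : Tendsto (fun n : ℕ => (t:ℝ)/n) atTop (𝓝 0) :=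
        Filter.Tendsto.div_atTop tendsto_const_nhds tendsto_natCast_atTop_atTop
      simpa using tendsto_const_nhds.add hdiv
    refine tendsto_of_tendsto_of_tendsto_of_le_of_le' tendsto_const_nhds h2 ?_ ?_
    · exact Filter.eventually_atTop.2 ⟨max 1 ⌈(t:ℝ)/δ⌉₊, hlb⟩
    · exact Filter.eventually_atTop.2 ⟨1, hub⟩
  exact htend.limsup_eq
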